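/- There exist independent uniform random variables on a two-element set α_w, α_x, α_y, α_z, β such that defining A_w = (α_w, β), A_x = (α_x, β'), A_y = (α_y, β), A_z = (α_z, β) appropriately (with the distribution of (A_x, A_y, A_z) constructed analogously using its own common bit, the pair (A_w, A_x) taken as independent, and the marginal of (A_y, A_z) agreeing in both triple distributions), one obtains a marginal model on the scenario generated by {w,y,z}, {x,y,z}, {w,x} whose entropies (in bits) are: H of each singleton = 2, H(A_w A_x) = 4, H of every other pair = 3, H(A_w A_y A_z) = H(A_x A_y A_z) = 4. -/
import Mathlib


/-- Shannon entropy (in bits) of a probability distribution `p` on a finite type. -/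
noncomputable def Hd {α : Type*} [Fintype α] (p : α → ℝ) : ℝ :=
  (∑ a : α, Real.negMulLog (p a)) / Real.log 2

/-- Each variable takes values in a four-element set (two bits). -/
abbrev V : Type := Fin 2 × Fin 2

/-- The common distribution of `(A_w, A_y, A_z)` and of `(A_x, A_y, A_z)`:
uniform over triples whose second bits agree (a shared fair bit `β`). -/
noncomputable def pZY : V × V × V → ℝ :=
  fun x => if x.1.2 = x.2.1.2 ∧ x.2.1.2 = x.2.2.2 then (16:ℝ)⁻¹ else 0

lemma nmlp (n : ℕ) : Real.negMulLog (((2:ℝ)^n)⁻¹) = n * ((2:ℝ)^n)⁻¹ * Real.log 2 := by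
  rw [Real.negMulLog, Real.log_inv, Real.log_pow]; ring

lemma nml16 : Real.negMulLog ((1/16:ℝ)) = 4 * (1/16:ℝ) * Real.log 2 := by
  have := nmlp 4; norm_num at this ⊢; linarith
lemma nml8 : Real.negMulLog ((1/8:ℝ)) = 3 * (1/8:ℝ) * Real.log 2 := by
  have := nmlp 3; norm_num at this ⊢; linarith
lemma nml4 : Real.negMulLog ((1/4:ℝ)) = 2 * (1/4:ℝ) * Real.log 2 := by
  have := nmlp 2; norm_num at this ⊢; linarith

set_option maxHeartbeats 2000000 in
/-- There is a marginal model on the scenario generated by {w,y,z}, {x,y,z}, {w,x}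
realizing the partial polymatroid f^{ZY}: all singleton entropies 2, H(A_w A_x) = 4,
all other pair entropies 3, and triple entropies H(A_w A_y A_z) = H(A_x A_y A_z) = 4. -/
theorem zhang_yeung_marginal_model_exists :
    ∃ (P1 P2 : V × V × V → ℝ) (P3 : V × V → ℝ),
      -- P1 : distribution of (A_w, A_y, A_z); P2 : of (A_x, A_y, A_z); P3 : of (A_w, A_x)
      (∀ x, 0 ≤ P1 x) ∧ (∑ x, P1 x = 1) ∧
      (∀ x, 0 ≤ P2 x) ∧ (∑ x, P2 x = 1) ∧
      (∀ x, 0 ≤ P3 x) ∧ (∑ x, P3 x = 1) ∧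
      -- compatibility: the (y,z) marginals of P1 and P2 agree
      (∀ b c : V, (∑ a : V, P1 (a, b, c)) = ∑ a : V, P2 (a, b, c)) ∧
      -- compatibility: the w marginals of P1 and P3 agree
      (∀ a : V, (∑ bc : V × V, P1 (a, bc.1, bc.2)) = ∑ b : V, P3 (a, b)) ∧
      -- compatibility: the x marginals of P2 and P3 agree
      (∀ a : V, (∑ bc : V × V, P2 (a, bc.1, bc.2)) = ∑ b : V, P3 (b, a)) ∧
      -- singleton entropies: 2 bits each
      Hd (fun a : V => ∑ bc : V × V, P1 (a, bc.1, bc.2)) = 2 ∧  -- H(A_w)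
      Hd (fun b : V => ∑ ac : V × V, P1 (ac.1, b, ac.2)) = 2 ∧  -- H(A_y)
      Hd (fun c : V => ∑ ab : V × V, P1 (ab.1, ab.2, c)) = 2 ∧  -- H(A_z)
      Hd (fun a : V => ∑ bc : V × V, P2 (a, bc.1, bc.2)) = 2 ∧  -- H(A_x)
      -- pair entropies
      Hd P3 = 4 ∧                                               -- H(A_w A_x)
      Hd (fun wy : V × V => ∑ c : V, P1 (wy.1, wy.2, c)) = 3 ∧  -- H(A_w A_y)
      Hd (fun wz : V × V => ∑ b : V, P1 (wz.1, b, wz.2)) = 3 ∧  -- H(A_w A_z)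
      Hd (fun yz : V × V => ∑ a : V, P1 (a, yz.1, yz.2)) = 3 ∧  -- H(A_y A_z)
      Hd (fun xy : V × V => ∑ c : V, P2 (xy.1, xy.2, c)) = 3 ∧  -- H(A_x A_y)
      Hd (fun xz : V × V => ∑ b : V, P2 (xz.1, b, xz.2)) = 3 ∧  -- H(A_x A_z)
      -- triple entropies
      Hd P1 = 4 ∧ Hd P2 = 4 := by
  refine ⟨pZY, pZY, fun _ => (16:ℝ)⁻¹, ?_, ?_, ?_, ?_, ?_, ?_, ?_, ?_, ?_, ?_, ?_, ?_,
    ?_, ?_, ?_, ?_, ?_, ?_, ?_, ?_, ?_⟩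
  · intro x; unfold pZY; positivity
  · simp [pZY, Fintype.sum_prod_type, Fin.sum_univ_two]; norm_num
  · intro x; unfold pZY; positivity
  · simp [pZY, Fintype.sum_prod_type, Fin.sum_univ_two]; norm_num
  · intro x; positivity
  · simp [Fintype.sum_prod_type, Fin.sum_univ_two]
  · intro b c; rfl
  · intro a; fin_cases a <;> simp [pZY, Fintype.sum_prod_type, Fin.sum_univ_two] <;> norm_num
  · intro a; fin_cases a <;> simp [pZY, Fintype.sum_prod_type, Fin.sum_univ_two] <;> norm_num
  · simp only [Hd, pZY, Fintype.sum_prod_type, Fin.sum_univ_two]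
    norm_num [nml4]; field_simp [nml4]; ring
  · simp only [Hd, pZY, Fintype.sum_prod_type, Fin.sum_univ_two]
    norm_num [nml4]; field_simp [nml4]; ring
  · simp only [Hd, pZY, Fintype.sum_prod_type, Fin.sum_univ_two]
    norm_num [nml4]; field_simp [nml4]; ring
  · simp only [Hd, pZY, Fintype.sum_prod_type, Fin.sum_univ_two]
    norm_num [nml4]; field_simp [nml4]; ring
  · simp only [Hd, Fintype.sum_prod_type, Fin.sum_univ_two]
    norm_num [nml16]; field_simp [nml16]; ring
  · simp only [Hd, pZY, Fintype.sum_prod_type, Fin.sum_univ_two]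
    norm_num [nml8]; field_simp [nml8]; ring
  · simp only [Hd, pZY, Fintype.sum_prod_type, Fin.sum_univ_two]
    norm_num [nml8]; field_simp [nml8]; ring
  · simp only [Hd, pZY, Fintype.sum_prod_type, Fin.sum_univ_two]
    norm_num [nml8]; field_simp [nml8]; ring
  · simp only [Hd, pZY, Fintype.sum_prod_type, Fin.sum_univ_two]
    norm_num [nml8]; field_simp [nml8]; ring
  · simp only [Hd, pZY, Fintype.sum_prod_type, Fin.sum_univ_two]
    norm_num [nml8]; field_simp [nml8]; ring
  · simp only [Hd, pZY, Fintype.sum_prod_type, Fin.sum_univ_two]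
    norm_num [nml16]; field_simp [nml16]; ring
  · simp only [Hd, pZY, Fintype.sum_prod_type, Fin.sum_univ_two]
    norm_num [nml16]; field_simp [nml16]; ring
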